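/- Let D be a digon-free loopless strict digraph with n vertices, and let Δ̃ = max over vertices v of sqrt(d^+(v)·d^-(v)). Then α(D) ≥ n/((2Δ̃/3) + 1). -/

import Mathlib

variable {V : Type*}

/-- A directed cycle in a digraph `D`, given as an injective map `Fin m → V`
(`m ≥ 2`) whose consecutive images (cyclically) are edges of `D`. -/
def IsCycleFun (D : V → V → Prop) {m : ℕ} (f : Fin m → V) : Prop :=
  2 ≤ m ∧ Function.Injective f ∧ ∀ i : Fin m, D (f i) (f (finRotate m i))

/-- The set `S` contains a directed cycle of `D`. -/
def HasCycleIn (D : V → V → Prop) (S : Set V) : Prop :=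
  ∃ (m : ℕ) (f : Fin m → V), IsCycleFun D f ∧ ∀ i, f i ∈ S

/-- Out-degree of a vertex. -/
noncomputable def outDeg (D : V → V → Prop) (v : V) : ℕ := Nat.card {u | D v u}

/-- In-degree of a vertex. -/
noncomputable def inDeg (D : V → V → Prop) (v : V) : ℕ := Nat.card {u | D u v}

/-- A coloring of the vertices of `D` with no monochromatic directed cycle. -/
def ProperColoring (D : V → V → Prop) {k : ℕ} (c : V → Fin k) : Prop :=
  ∀ (m : ℕ) (f : Fin m → V), IsCycleFun D f → ∃ i j, c (f i) ≠ c (f j)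

/-- The number of proper `k`-colorings of `D` (value of the dichromatic polynomial). -/
noncomputable def numColorings (V : Type*) (D : V → V → Prop) (k : ℕ) : ℕ :=
  Nat.card {c : V → Fin k // ProperColoring D c}

/-- The finset `S` carries a (Hamiltonian on `S`) directed cycle of `D`. -/
def IsCycleSet (D : V → V → Prop) (S : Finset V) : Prop :=
  2 ≤ S.card ∧ ∃ f : Fin S.card ≃ {x // x ∈ S},
    ∀ i, D (f i) (f (finRotate S.card i))

/-- The finset `S` induces exactly a directed cycle of `D`. -/
def IsInducedCycleSet (D : V → V → Prop) (S : Finset V) : Prop :=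
  2 ≤ S.card ∧ ∃ f : Fin S.card ≃ {x // x ∈ S},
    (∀ i, D (f i) (f (finRotate S.card i))) ∧
    ∀ a b : {x // x ∈ S}, D (a : V) b → ∃ i, f i = a ∧ f (finRotate S.card i) = b

/-- `D` has girth `g` : it has a directed cycle of length `g` and no shorter one. -/
def HasGirth (D : V → V → Prop) (g : ℕ) : Prop :=
  (∃ f : Fin g → V, IsCycleFun D f) ∧
    ∀ (m : ℕ) (f : Fin m → V), IsCycleFun D f → g ≤ m


section AuxLemmas

open Finset

set_option maxHeartbeats 1000000


open Finset

variable {V : Type*}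

/-- Counting lemma: among all bijections `V ≃ Fin n`, the number of those that place `v`
before every element of `T` (with `v ∉ T`), times `T.card + 1`, equals the total number. -/
lemma count_min {V : Type*} [Fintype V] [DecidableEq V] (T : Finset V) (v : V) (hv : v ∉ T) :
    (Finset.univ.filter
        (fun σ : V ≃ Fin (Fintype.card V) => ∀ u ∈ T, σ v < σ u)).card * (T.card + 1)
      = Fintype.card (V ≃ Fin (Fintype.card V)) := by
  classical
  set n := Fintype.card V
  set W : Finset V := insert v T with hW
  set C : V → Finset (V ≃ Fin n) :=
    fun w => Finset.univ.filter (fun σ => ∀ u ∈ W, u ≠ w → σ w < σ u) with hC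
  have hCv : Finset.univ.filter (fun σ : V ≃ Fin n => ∀ u ∈ T, σ v < σ u) = C v := by
    ext σ
    simp only [hC, Finset.mem_filter, Finset.mem_univ, true_and]
    constructor
    · rintro h u hu hne
      rcases Finset.mem_insert.1 hu with rfl | hu
      · exact absurd rfl hne
      · exact h u hu
    · intro h u hu
      exact h u (Finset.mem_insert_of_mem hu) (fun e => hv (e ▸ hu))
  have hcard : ∀ w ∈ W, (C w).card = (C v).card := by
    intro w hw
    by_cases hwv : w = v
    · rw [hwv]
    have hvW : v ∈ W := Finset.mem_insert_self v T
    refine Finset.card_nbij' (fun σ => (Equiv.swap v w).trans σ)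
      (fun σ => (Equiv.swap v w).trans σ) ?_ ?_ ?_ ?_
    · intro σ hσ
      simp only [hC, Finset.mem_coe, Finset.mem_filter, Finset.mem_univ, true_and] at hσ ⊢
      intro u hu hune
      simp only [Equiv.trans_apply, Equiv.swap_apply_left]
      by_cases huw : u = w
      · subst huw
        rw [Equiv.swap_apply_right]
        exact hσ v hvW (Ne.symm hwv)
      · rw [Equiv.swap_apply_of_ne_of_ne hune huw]
        exact hσ u hu huw
    · intro σ hσ
      simp only [hC, Finset.mem_coe, Finset.mem_filter, Finset.mem_univ, true_and] at hσ ⊢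
      intro u hu hune
      simp only [Equiv.trans_apply, Equiv.swap_apply_right]
      by_cases huv : u = v
      · subst huv
        rw [Equiv.swap_apply_left]
        exact hσ w hw hwv
      · rw [Equiv.swap_apply_of_ne_of_ne huv hune]
        exact hσ u hu huv
    · intro σ _
      ext x
      simp
    · intro σ _
      ext x
      simp
  have hcover : (Finset.univ : Finset (V ≃ Fin n)) = W.biUnion C := by
    ext σ
    simp only [Finset.mem_univ, true_iff, Finset.mem_biUnion]
    obtain ⟨w, hwW, hwmin⟩ := Finset.exists_min_image W (fun u => σ u)
      ⟨v, Finset.mem_insert_self v T⟩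
    refine ⟨w, hwW, ?_⟩
    simp only [hC, Finset.mem_filter, Finset.mem_univ, true_and]
    intro u hu hune
    exact lt_of_le_of_ne (hwmin u hu) (fun e => hune (σ.injective e.symm))
  have hdisj : ∀ w₁ ∈ W, ∀ w₂ ∈ W, w₁ ≠ w₂ → Disjoint (C w₁) (C w₂) := by
    intro w₁ h₁ w₂ h₂ hne
    rw [Finset.disjoint_left]
    intro σ hσ1 hσ2
    simp only [hC, Finset.mem_filter, Finset.mem_univ, true_and] at hσ1 hσ2
    exact absurd (hσ1 w₂ h₂ (Ne.symm hne)) (not_lt.2 (le_of_lt (hσ2 w₁ h₁ hne)))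
  have := Finset.card_biUnion hdisj
  rw [hCv]
  calc (C v).card * (T.card + 1) = ∑ w ∈ W, (C v).card := by
        rw [Finset.sum_const, hW, Finset.card_insert_of_notMem hv, smul_eq_mul, mul_comm]
    _ = ∑ w ∈ W, (C w).card := by
        exact Finset.sum_congr rfl (fun w hw => (hcard w hw).symm)
    _ = (W.biUnion C).card := this.symm
    _ = Fintype.card (V ≃ Fin n) := by rw [← hcover, Finset.card_univ]

/-- The key real inequality. -/
lemma key_ineq (a b Δ : ℝ) (ha : 0 ≤ a) (hb : 0 ≤ b) (hs : Real.sqrt (a * b) ≤ Δ) :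
    3 / (2 * Δ + 3) ≤ 1 / (a + 1) + 1 / (b + 1) - 1 / (a + b + 1) := by
  set s := Real.sqrt (a * b) with hsdef
  have hs0 : 0 ≤ s := Real.sqrt_nonneg _
  have hs2 : s ^ 2 = a * b := Real.sq_sqrt (mul_nonneg ha hb)
  have h2s : 2 * s ≤ a + b := by
    have h1 : a * b ≤ ((a + b) / 2) ^ 2 := by nlinarith [sq_nonneg (a - b)]
    have h2 : s ≤ (a + b) / 2 := by
      rw [hsdef]
      calc Real.sqrt (a * b) ≤ Real.sqrt (((a + b) / 2) ^ 2) := Real.sqrt_le_sqrt h1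
        _ = (a + b) / 2 := Real.sqrt_sq (by positivity)
    linarith
  have hΔ0 : 0 ≤ Δ := le_trans hs0 hs
  have step1 : 3 / (2 * Δ + 3) ≤ 3 / (2 * s + 3) := by
    apply div_le_div_of_nonneg_left (by norm_num) (by positivity) (by linarith)
  refine le_trans step1 ?_
  rw [div_add_div _ _ (by positivity) (by positivity),
    div_sub_div _ _ (by positivity) (by positivity),
    div_le_div_iff₀ (by positivity) (by positivity)]
  have hd : 0 ≤ a + b - 2 * s := by linarith
  nlinarith [mul_nonneg (mul_nonneg hs0 hs0) hd, mul_nonneg hs0 (mul_nonneg hd hd),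
    mul_nonneg hs0 hd, sq_nonneg s, hs0, mul_nonneg ha hb]

lemma vertex_count {V : Type*} [Fintype V] [DecidableEq V] (A B : Finset V) (v : V)
    (hvA : v ∉ A) (hvB : v ∉ B) (hAB : Disjoint A B) (Δ : ℝ)
    (hsqrt : Real.sqrt ((A.card : ℝ) * (B.card : ℝ)) ≤ Δ) :
    (Fintype.card (V ≃ Fin (Fintype.card V)) : ℝ) * (3 / (2 * Δ + 3))
      ≤ ((Finset.univ.filter (fun σ : V ≃ Fin (Fintype.card V) =>
          (∀ u ∈ A, σ v < σ u) ∨ (∀ u ∈ B, σ v < σ u))).card : ℝ) := by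
  set n := Fintype.card V
  set K := Fintype.card (V ≃ Fin n) with hK
  have h1 := count_min A v hvA
  have h2 := count_min B v hvB
  have h3 : (Finset.univ.filter
      (fun σ : V ≃ Fin n => ∀ u ∈ A ∪ B, σ v < σ u)).card * (A.card + B.card + 1) = K := by
    have := count_min (A ∪ B) v (fun h => (Finset.mem_union.1 h).elim hvA hvB)
    rwa [Finset.card_union_of_disjoint hAB] at this
  have hIE : (Finset.univ.filter (fun σ : V ≃ Fin n =>
        (∀ u ∈ A, σ v < σ u) ∨ (∀ u ∈ B, σ v < σ u))).card
      + (Finset.univ.filter (fun σ : V ≃ Fin n => ∀ u ∈ A ∪ B, σ v < σ u)).card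
      = (Finset.univ.filter (fun σ : V ≃ Fin n => ∀ u ∈ A, σ v < σ u)).card
      + (Finset.univ.filter (fun σ : V ≃ Fin n => ∀ u ∈ B, σ v < σ u)).card := by
    have e1 : Finset.univ.filter (fun σ : V ≃ Fin n =>
          (∀ u ∈ A, σ v < σ u) ∨ (∀ u ∈ B, σ v < σ u))
        = Finset.univ.filter (fun σ : V ≃ Fin n => ∀ u ∈ A, σ v < σ u)
          ∪ Finset.univ.filter (fun σ : V ≃ Fin n => ∀ u ∈ B, σ v < σ u) :=
      Finset.filter_or _ _ _
    have e2 : Finset.univ.filter (fun σ : V ≃ Fin n => ∀ u ∈ A ∪ B, σ v < σ u)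
        = Finset.univ.filter (fun σ : V ≃ Fin n => ∀ u ∈ A, σ v < σ u)
          ∩ Finset.univ.filter (fun σ : V ≃ Fin n => ∀ u ∈ B, σ v < σ u) := by
      ext σ
      simp only [Finset.mem_filter, Finset.mem_univ, true_and, Finset.mem_inter,
        Finset.mem_union]
      constructor
      · intro h
        exact ⟨fun u hu => h u (Or.inl hu), fun u hu => h u (Or.inr hu)⟩
      · rintro ⟨hp, hq⟩ u (hu | hu)
        · exact hp u hu
        · exact hq u hu
    rw [e1, e2, Finset.card_union_add_card_inter]
  set a := A.card
  set b := B.card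
  have hΔ0 : 0 ≤ Δ := le_trans (Real.sqrt_nonneg _) hsqrt
  have key := key_ineq (a : ℝ) (b : ℝ) Δ (by positivity) (by positivity) hsqrt
  have h1' : ((Finset.univ.filter (fun σ : V ≃ Fin n => ∀ u ∈ A, σ v < σ u)).card : ℝ)
      * ((a : ℝ) + 1) = (K : ℝ) := by exact_mod_cast congrArg (Nat.cast (R := ℝ)) h1
  have h2' : ((Finset.univ.filter (fun σ : V ≃ Fin n => ∀ u ∈ B, σ v < σ u)).card : ℝ)
      * ((b : ℝ) + 1) = (K : ℝ) := by exact_mod_cast congrArg (Nat.cast (R := ℝ)) h2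
  have h3' : ((Finset.univ.filter (fun σ : V ≃ Fin n => ∀ u ∈ A ∪ B, σ v < σ u)).card : ℝ)
      * ((a : ℝ) + (b : ℝ) + 1) = (K : ℝ) := by
    exact_mod_cast congrArg (Nat.cast (R := ℝ)) h3
  have hIE' : ((Finset.univ.filter (fun σ : V ≃ Fin n =>
        (∀ u ∈ A, σ v < σ u) ∨ (∀ u ∈ B, σ v < σ u))).card : ℝ)
      + ((Finset.univ.filter (fun σ : V ≃ Fin n => ∀ u ∈ A ∪ B, σ v < σ u)).card : ℝ)
      = ((Finset.univ.filter (fun σ : V ≃ Fin n => ∀ u ∈ A, σ v < σ u)).card : ℝ)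
      + ((Finset.univ.filter (fun σ : V ≃ Fin n => ∀ u ∈ B, σ v < σ u)).card : ℝ) := by
    exact_mod_cast congrArg (Nat.cast (R := ℝ)) hIE
  have hap : (0:ℝ) < (a : ℝ) + 1 := by positivity
  have hbp : (0:ℝ) < (b : ℝ) + 1 := by positivity
  have habp : (0:ℝ) < (a : ℝ) + (b : ℝ) + 1 := by positivity
  have hKr : (0:ℝ) ≤ (K : ℝ) := by positivity
  have expand : (K : ℝ) * (1 / ((a:ℝ) + 1) + 1 / ((b:ℝ) + 1) - 1 / ((a:ℝ) + (b:ℝ) + 1))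
      = (K:ℝ) / ((a:ℝ) + 1) + (K:ℝ) / ((b:ℝ) + 1) - (K:ℝ) / ((a:ℝ) + (b:ℝ) + 1) := by ring
  have ecp := eq_div_of_mul_eq (ne_of_gt hap) h1'
  have ecm := eq_div_of_mul_eq (ne_of_gt hbp) h2'
  have eci := eq_div_of_mul_eq (ne_of_gt habp) h3'
  calc (K : ℝ) * (3 / (2 * Δ + 3))
      ≤ (K : ℝ) * (1 / ((a:ℝ) + 1) + 1 / ((b:ℝ) + 1) - 1 / ((a:ℝ) + (b:ℝ) + 1)) :=
        mul_le_mul_of_nonneg_left key hKr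
    _ ≤ _ := by rw [expand, ← ecp, ← ecm, ← eci]; linarith [hIE']

end AuxLemmas

/-- For a digon-free digraph, α(D) ≥ n/((2Δ̃/3)+1) with
Δ̃ = max over vertices of √(d⁺(v)·d⁻(v)). -/

theorem stmt_4 {V : Type*} [Fintype V] (D : V → V → Prop) (hloopless : ∀ v, ¬ D v v)
    (hdigonfree : ∀ a b, D a b → ¬ D b a)
    (Δ : ℝ)
    (hΔ : IsGreatest {x : ℝ | ∃ v : V, x = Real.sqrt ((outDeg D v : ℝ) * (inDeg D v : ℝ))} Δ) :
    ∃ S : Finset V, ¬ HasCycleIn D ↑S ∧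
      (Fintype.card V : ℝ) / (2 * Δ / 3 + 1) ≤ (S.card : ℝ) := by
  
  classical
  obtain ⟨v₀, hv₀⟩ := hΔ.1
  have hΔ0 : 0 ≤ Δ := hv₀ ▸ Real.sqrt_nonneg _
  have h23 : (0:ℝ) < 2 * Δ + 3 := by linarith
  set n := Fintype.card V with hn
  -- acyclicity of the selected sets
  have hacyc : ∀ σ : V ≃ Fin n, ¬ HasCycleIn D
      ↑(Finset.univ.filter (fun v =>
        (∀ u ∈ Finset.univ.filter (fun u => D v u), σ v < σ u) ∨
        (∀ u ∈ Finset.univ.filter (fun u => D u v), σ v < σ u))) := by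
    rintro σ ⟨m, f, ⟨hm2, hinj, hedge⟩, hmem⟩
    have hmpos : 0 < m := by omega
    obtain ⟨i, -, hmax⟩ := Finset.exists_max_image (Finset.univ : Finset (Fin m))
      (fun j => σ (f j)) ⟨⟨0, hmpos⟩, Finset.mem_univ _⟩
    have hgood := hmem i
    rw [Finset.mem_coe, Finset.mem_filter] at hgood
    rcases hgood.2 with h | h
    · have h1 : σ (f i) < σ (f (finRotate m i)) :=
        h _ (by simp only [Finset.mem_filter, Finset.mem_univ, true_and]; exact hedge i)
      exact absurd h1 (not_lt.2 (hmax _ (Finset.mem_univ _)))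
    · have hedgej : D (f ((finRotate m).symm i)) (f i) := by
        have := hedge ((finRotate m).symm i)
        rwa [Equiv.apply_symm_apply] at this
      have h1 : σ (f i) < σ (f ((finRotate m).symm i)) :=
        h _ (by simp only [Finset.mem_filter, Finset.mem_univ, true_and]; exact hedgej)
      exact absurd h1 (not_lt.2 (hmax _ (Finset.mem_univ _)))
  -- degree identification
  have houtdeg : ∀ v, outDeg D v = (Finset.univ.filter (fun u => D v u)).card := by
    intro v
    rw [outDeg, Nat.card_coe_set_eq, Set.ncard_eq_toFinset_card', Set.toFinset_setOf]
  have hindeg : ∀ v, inDeg D v = (Finset.univ.filter (fun u => D u v)).card := by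
    intro v
    rw [inDeg, Nat.card_coe_set_eq, Set.ncard_eq_toFinset_card', Set.toFinset_setOf]
  haveI : Nonempty (V ≃ Fin n) := ⟨Fintype.equivFin V⟩
  -- per-vertex counting bound
  have hvcount : ∀ v : V, (Fintype.card (V ≃ Fin n) : ℝ) * (3 / (2 * Δ + 3))
      ≤ ((Finset.univ.filter (fun σ : V ≃ Fin n =>
          (∀ u ∈ Finset.univ.filter (fun u => D v u), σ v < σ u) ∨
          (∀ u ∈ Finset.univ.filter (fun u => D u v), σ v < σ u))).card : ℝ) := by
    intro v
    have hvA : v ∉ Finset.univ.filter (fun u => D v u) := by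
      simp only [Finset.mem_filter, Finset.mem_univ, true_and]
      exact hloopless v
    have hvB : v ∉ Finset.univ.filter (fun u => D u v) := by
      simp only [Finset.mem_filter, Finset.mem_univ, true_and]
      exact hloopless v
    have hAB : Disjoint (Finset.univ.filter (fun u => D v u))
        (Finset.univ.filter (fun u => D u v)) := by
      rw [Finset.disjoint_left]
      intro u hu1 hu2
      simp only [Finset.mem_filter, Finset.mem_univ, true_and] at hu1 hu2
      exact hdigonfree _ _ hu1 hu2
    have hsqrt : Real.sqrt
        (((Finset.univ.filter (fun u => D v u)).card : ℝ)
          * ((Finset.univ.filter (fun u => D u v)).card : ℝ)) ≤ Δ := by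
      have := hΔ.2 ⟨v, rfl⟩
      rwa [houtdeg v, hindeg v] at this
    exact vertex_count _ _ v hvA hvB hAB Δ hsqrt
  -- sum swap
  have hswap : ∑ σ : V ≃ Fin n, ((Finset.univ.filter (fun v =>
        (∀ u ∈ Finset.univ.filter (fun u => D v u), σ v < σ u) ∨
        (∀ u ∈ Finset.univ.filter (fun u => D u v), σ v < σ u))).card : ℝ)
      = ∑ v : V, ((Finset.univ.filter (fun σ : V ≃ Fin n =>
        (∀ u ∈ Finset.univ.filter (fun u => D v u), σ v < σ u) ∨
        (∀ u ∈ Finset.univ.filter (fun u => D u v), σ v < σ u))).card : ℝ) := by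
    simp only [Finset.card_filter]
    push_cast
    rw [Finset.sum_comm]
  -- find a good permutation
  have hexists : ∃ σ : V ≃ Fin n,
      (n : ℝ) * (3 / (2 * Δ + 3)) ≤ ((Finset.univ.filter (fun v =>
        (∀ u ∈ Finset.univ.filter (fun u => D v u), σ v < σ u) ∨
        (∀ u ∈ Finset.univ.filter (fun u => D u v), σ v < σ u))).card : ℝ) := by
    by_contra hcon
    push_neg at hcon
    have hlt : ∑ σ : V ≃ Fin n, ((Finset.univ.filter (fun v =>
          (∀ u ∈ Finset.univ.filter (fun u => D v u), σ v < σ u) ∨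
          (∀ u ∈ Finset.univ.filter (fun u => D u v), σ v < σ u))).card : ℝ)
        < ∑ _σ : V ≃ Fin n, (n : ℝ) * (3 / (2 * Δ + 3)) :=
      Finset.sum_lt_sum_of_nonempty Finset.univ_nonempty (fun σ _ => hcon σ)
    rw [Finset.sum_const, Finset.card_univ, nsmul_eq_mul, hswap] at hlt
    have hge : (n : ℝ) * ((Fintype.card (V ≃ Fin n) : ℝ) * (3 / (2 * Δ + 3)))
        ≤ ∑ v : V, ((Finset.univ.filter (fun σ : V ≃ Fin n =>
          (∀ u ∈ Finset.univ.filter (fun u => D v u), σ v < σ u) ∨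
          (∀ u ∈ Finset.univ.filter (fun u => D u v), σ v < σ u))).card : ℝ) := by
      calc (n : ℝ) * ((Fintype.card (V ≃ Fin n) : ℝ) * (3 / (2 * Δ + 3)))
          = ∑ _v : V, ((Fintype.card (V ≃ Fin n) : ℝ) * (3 / (2 * Δ + 3))) := by
            rw [Finset.sum_const, Finset.card_univ, nsmul_eq_mul, hn]
        _ ≤ _ := Finset.sum_le_sum (fun v _ => hvcount v)
    nlinarith [hge, hlt]
  obtain ⟨σ, hσ⟩ := hexists
  refine ⟨Finset.univ.filter (fun v =>
      (∀ u ∈ Finset.univ.filter (fun u => D v u), σ v < σ u) ∨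
      (∀ u ∈ Finset.univ.filter (fun u => D u v), σ v < σ u)), hacyc σ, ?_⟩
  have hpos : (0:ℝ) < 2 * Δ / 3 + 1 := by linarith
  rw [div_le_iff₀ hpos]
  have h1 : (n : ℝ) * 3 ≤ ((Finset.univ.filter (fun v =>
      (∀ u ∈ Finset.univ.filter (fun u => D v u), σ v < σ u) ∨
      (∀ u ∈ Finset.univ.filter (fun u => D u v), σ v < σ u))).card : ℝ) * (2 * Δ + 3) := by
    have h2 := mul_le_mul_of_nonneg_right hσ (le_of_lt h23)
    calc (n : ℝ) * 3 = (n : ℝ) * (3 / (2 * Δ + 3)) * (2 * Δ + 3) := by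
          field_simp
      _ ≤ _ := h2
  nlinarith [h1]
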